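/- Let f : ℂ → ℂ be holomorphic and bounded on 𝔻, not identically zero on 𝔻, and let λ ∈ ℂ be such that Σ_{n=1}^∞ (x+n)^{−2} f(1/(x+n)) = λ f(x) for all x ∈ [0,1]. Then |λ| ≤ 1; moreover, if |λ| = 1 then λ = 1 and there exists a constant a ∈ ℂ with f(z) = a/((log 2)(1+z)) for all z ∈ 𝔻. In particular, 1 is a simple eigenvalue of the transfer operator on bounded holomorphic functions on 𝔻 and it is the only eigenvalue of modulus one. -/

import Mathlib

open Complex Filter

/-- The disc `𝔻 = {z : |z − 2/3| < 1}`. -/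
def gaussDisc : Set ℂ := Metric.ball ((2:ℂ)/3) 1


lemma coe_mem_gaussDisc {x : ℝ} (hx : x ∈ Set.Icc (0:ℝ) 1) : (x:ℂ) ∈ gaussDisc := by
  simp only [gaussDisc, Metric.mem_ball, Complex.dist_eq]
  have h : ((x:ℂ) - 2/3) = ((x - 2/3 : ℝ) : ℂ) := by push_cast; ring
  rw [h, Complex.norm_real, Real.norm_eq_abs, abs_lt]
  constructor <;> [linarith [hx.1]; linarith [hx.2]]

lemma one_add_ne_zero_of_mem {z : ℂ} (hz : z ∈ gaussDisc) : 1 + z ≠ 0 := by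
  intro h
  have hz1 : z = -1 := by linear_combination h
  subst hz1
  simp only [gaussDisc, Metric.mem_ball, Complex.dist_eq] at hz
  have h2 : ((-1:ℂ) - 2/3) = ((-5/3 : ℝ) : ℂ) := by push_cast; ring
  rw [h2, Complex.norm_real, Real.norm_eq_abs] at hz
  rw [abs_lt] at hz
  linarith [hz.1]

lemma hasSum_tele {x : ℝ} (hx : 0 ≤ x) :
    HasSum (fun n : ℕ => 1/((x+n+1)*(x+n+2))) (1/(x+1)) := by
  have hpos : ∀ n : ℕ, (0:ℝ) < x + n + 1 := fun n => by positivity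
  have hpos2 : ∀ n : ℕ, (0:ℝ) < x + n + 2 := fun n => by positivity
  rw [hasSum_iff_tendsto_nat_of_nonneg (fun n => by positivity)]
  have hps : ∀ N : ℕ, ∑ n ∈ Finset.range N, 1/((x+n+1)*(x+n+2)) = 1/(x+1) - 1/(x+N+1) := by
    intro N
    have h := Finset.sum_range_sub' (f := fun n : ℕ => 1/(x+n+1)) N
    have h0 : x + (0:ℕ) + 1 = x + 1 := by norm_num
    rw [h0] at h
    rw [← h]
    apply Finset.sum_congr rfl
    intro i _
    have h1 := hpos i
    have h2 := hpos2 i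
    push_cast
    rw [show x+((i:ℝ)+1)+1 = x+(i:ℝ)+2 by ring, div_sub_div _ _ h1.ne' h2.ne']
    rw [one_mul, mul_one]
    congr 1
    ring
  simp only [hps]
  have h1 : Tendsto (fun N : ℕ => 1/(x+N+1)) atTop (nhds 0) := by
    simp only [one_div]
    apply Tendsto.inv_tendsto_atTop
    apply tendsto_atTop_add_const_right
    apply tendsto_atTop_add_const_left
    exact tendsto_natCast_atTop_atTop
  simpa using tendsto_const_nhds.sub h1
lemma eqOn_of_seq {f F : ℂ → ℂ} (hf : AnalyticOnNhd ℂ f gaussDisc)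
    (hF : AnalyticOnNhd ℂ F gaussDisc) {c : ℝ} (hc : 0 ≤ c)
    (h : ∀ n : ℕ, f (((1/(c+n+1) : ℝ)) : ℂ) = F (((1/(c+n+1):ℝ)) : ℂ)) :
    Set.EqOn f F gaussDisc := by
  have h0 : (0:ℂ) ∈ gaussDisc := by
    simp only [gaussDisc, Metric.mem_ball, Complex.dist_eq]
    have h2 : ((0:ℂ) - 2/3) = ((-2/3 : ℝ) : ℂ) := by push_cast; ring
    rw [h2, Complex.norm_real, Real.norm_eq_abs, abs_lt]; constructor <;> norm_num
  apply hf.eqOn_of_preconnected_of_frequently_eq hF ((convex_ball _ _).isPreconnected) h0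
  have htend : Tendsto (fun n : ℕ => (((1/(c+n+1):ℝ)) : ℂ)) atTop (nhdsWithin 0 {(0:ℂ)}ᶜ) := by
    rw [tendsto_nhdsWithin_iff]
    constructor
    · have hr : Tendsto (fun n : ℕ => (1/(c+n+1):ℝ)) atTop (nhds 0) := by
        simp only [one_div]
        exact Tendsto.inv_tendsto_atTop (tendsto_atTop_add_const_right _ _
          (tendsto_atTop_add_const_left _ _ tendsto_natCast_atTop_atTop))
      have h3 := (Complex.continuous_ofReal.tendsto 0).comp hr
      simpa only [Complex.ofReal_zero, Function.comp_def] using h3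
    · filter_upwards with n
      simp only [Set.mem_compl_iff, Set.mem_singleton_iff]
      exact Complex.ofReal_ne_zero.mpr (by positivity)
  exact htend.frequently (Frequently.of_forall h)

theorem transferOp_unit_eigenvalues (f : ℂ → ℂ)
    (hf_holo : DifferentiableOn ℂ f gaussDisc)
    (hf_bdd : ∃ M : ℝ, ∀ z ∈ gaussDisc, ‖f z‖ ≤ M)
    (hf_ne : ∃ z ∈ gaussDisc, f z ≠ 0)
    (lam : ℂ)
    (heig : ∀ x : ℝ, x ∈ Set.Icc (0:ℝ) 1 →
      ∑' n : ℕ, ((((x : ℂ) + (n : ℕ) + 1) ^ 2)⁻¹) * f (1 / ((x : ℂ) + (n : ℕ) + 1))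
        = lam * f (x : ℂ)) :
    ‖lam‖ ≤ 1 ∧
      (‖lam‖ = 1 → lam = 1 ∧
        ∃ a : ℂ, ∀ z ∈ gaussDisc, f z = a / ((Real.log 2 : ℂ) * (1 + z))) := by
  obtain ⟨z₁, hz₁, hz₁ne⟩ := hf_ne
  have hopen : IsOpen gaussDisc := Metric.isOpen_ball
  have hana : AnalyticOnNhd ℂ f gaussDisc := hf_holo.analyticOnNhd hopen
  have hnorm1add : ∀ y : ℝ, 0 ≤ y → ‖(1 + (y:ℂ))‖ = 1 + y := by
    intro y hy
    rw [show (1 + (y:ℂ)) = ((1+y:ℝ):ℂ) by push_cast; ring, Complex.norm_real]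
    exact abs_of_nonneg (by linarith)
  -- maximum of g on [0,1]
  have hcont : ContinuousOn (fun x : ℝ => ‖(1 + (x:ℂ)) * f (x:ℂ)‖) (Set.Icc 0 1) := by
    apply ContinuousOn.norm
    apply ContinuousOn.mul
    · exact (continuous_const.add Complex.continuous_ofReal).continuousOn
    · exact hf_holo.continuousOn.comp Complex.continuous_ofReal.continuousOn
        (fun x hx => coe_mem_gaussDisc hx)
  obtain ⟨x₀, hx₀, hmax'⟩ := (isCompact_Icc).exists_isMaxOn
    ⟨0, by constructor <;> norm_num⟩ hcont
  have hmax : ∀ x ∈ Set.Icc (0:ℝ) 1, ‖(1 + (x:ℂ)) * f (x:ℂ)‖ ≤ ‖(1 + (x₀:ℂ)) * f (x₀:ℂ)‖ :=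
    fun x hx => hmax' hx
  set M : ℝ := ‖(1 + (x₀:ℂ)) * f (x₀:ℂ)‖ with hM
  have h0x : (0:ℝ) ≤ x₀ := hx₀.1
  -- M is positive
  have hMpos : 0 < M := by
    rcases lt_or_eq_of_le (norm_nonneg ((1 + (x₀:ℂ)) * f (x₀:ℂ))) with h | h
    · exact h
    · exfalso
      have hzero : ∀ n : ℕ, f (((1/(0+(n:ℝ)+1):ℝ)):ℂ) = (fun _ : ℂ => (0:ℂ)) (((1/(0+(n:ℝ)+1):ℝ)):ℂ) := by
        intro n
        have hy : (1/(0+(n:ℝ)+1)) ∈ Set.Icc (0:ℝ) 1 := by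
          constructor
          · positivity
          · rw [div_le_one (by positivity)]
            have : (0:ℝ) ≤ (n:ℝ) := n.cast_nonneg
            linarith
        have hb := hmax _ hy
        rw [hM, ← h] at hb
        have hgz : (1 + ((1/(0+(n:ℝ)+1):ℝ):ℂ)) * f ((1/(0+(n:ℝ)+1):ℝ):ℂ) = 0 :=
          norm_le_zero_iff.mp hb
        have hne : (1 + ((1/(0+(n:ℝ)+1):ℝ):ℂ)) ≠ 0 :=
          one_add_ne_zero_of_mem (coe_mem_gaussDisc hy)
        rcases mul_eq_zero.mp hgz with h' | h'
        · exact absurd h' hne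
        · exact h'
      have heq0 : Set.EqOn f (fun _ : ℂ => (0:ℂ)) gaussDisc :=
        eqOn_of_seq hana analyticOnNhd_const le_rfl hzero
      exact hz₁ne (heq0 hz₁)
  -- basic positivity for denominators
  have hp1 : ∀ n : ℕ, (0:ℝ) < x₀ + n + 1 := fun n => by positivity
  have hp2 : ∀ n : ℕ, (0:ℝ) < x₀ + n + 2 := fun n => by positivity
  have hyIcc : ∀ n : ℕ, (1/(x₀+(n:ℝ)+1) : ℝ) ∈ Set.Icc (0:ℝ) 1 := by
    intro n
    constructor
    · positivity
    · rw [div_le_one (hp1 n)]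
      have : (0:ℝ) ≤ (n:ℝ) := n.cast_nonneg
      linarith
  have hcast : ∀ n : ℕ, (1 / ((x₀:ℂ) + (n:ℕ) + 1)) = (((1/(x₀+(n:ℝ)+1) : ℝ)) : ℂ) := by
    intro n; push_cast; ring
  have hcnz : ∀ n : ℕ, ((x₀:ℂ) + (n:ℕ) + 1) ≠ 0 := by
    intro n
    rw [show ((x₀:ℂ) + (n:ℕ) + 1) = ((x₀+(n:ℝ)+1 : ℝ) : ℂ) by push_cast; ring]
    exact_mod_cast (hp1 n).ne'
  -- the terms of the series at x₀
  set T : ℕ → ℂ := fun n => ((((x₀:ℂ) + (n:ℕ) + 1) ^ 2)⁻¹) * f (1 / ((x₀:ℂ) + (n:ℕ) + 1)) with hT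
  -- bound on f at the points 1/(x₀+n+1)
  have hfb : ∀ n : ℕ, ‖f (((1/(x₀+(n:ℝ)+1):ℝ)):ℂ)‖ ≤ M * (x₀+n+1)/(x₀+n+2) := by
    intro n
    have hb := hmax _ (hyIcc n)
    rw [norm_mul, hnorm1add _ (by positivity)] at hb
    have hy2 : 1 + 1/(x₀+(n:ℝ)+1) = (x₀+n+2)/(x₀+n+1) := by
      field_simp
      ring
    rw [hy2] at hb
    rw [mul_comm] at hb
    rw [← le_div_iff₀ (by positivity)] at hb
    calc ‖f (((1/(x₀+(n:ℝ)+1):ℝ)):ℂ)‖ ≤ M / ((x₀+n+2)/(x₀+n+1)) := hb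
      _ = M * (x₀+n+1)/(x₀+n+2) := by rw [div_div_eq_mul_div]
  have hTnorm : ∀ n : ℕ, ‖T n‖ ≤ M * (1/((x₀+(n:ℝ)+1)*(x₀+(n:ℝ)+2))) := by
    intro n
    rw [hT]
    simp only []
    rw [hcast n, norm_mul, norm_inv, norm_pow]
    rw [show ((x₀:ℂ) + (n:ℕ) + 1) = ((x₀+(n:ℝ)+1 : ℝ) : ℂ) by push_cast; ring,
      Complex.norm_real, Real.norm_of_nonneg (hp1 n).le]
    have hle := hfb n
    have hkey : ((x₀+(n:ℝ)+1)^2)⁻¹ * (M * (x₀+n+1)/(x₀+n+2)) = M * (1/((x₀+(n:ℝ)+1)*(x₀+(n:ℝ)+2))) := by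
      field_simp
    rw [← hkey]
    exact mul_le_mul_of_nonneg_left hle (by positivity)
  have hsum_tele := hasSum_tele h0x
  have hTsummable_norm : Summable (fun n => ‖T n‖) :=
    Summable.of_nonneg_of_le (fun n => norm_nonneg _) hTnorm (hsum_tele.summable.mul_left M)
  have hTsummable : Summable T := hTsummable_norm.of_norm
  have hThasSum : HasSum T (lam * f (x₀:ℂ)) := by
    have h := hTsummable.hasSum
    rwa [show ∑' n, T n = lam * f (x₀:ℂ) from heig x₀ hx₀] at h
  -- Part 1 : ‖lam‖ ≤ 1
  have hMeq : M = (1+x₀) * ‖f (x₀:ℂ)‖ := by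
    rw [hM, norm_mul, hnorm1add _ h0x]
  have hnormle : ‖lam‖ * M ≤ M := by
    have h1 : ‖lam * f (x₀:ℂ)‖ ≤ M * (1/(x₀+1)) := by
      rw [← hThasSum.tsum_eq]
      calc ‖∑' n, T n‖ ≤ ∑' n, ‖T n‖ := norm_tsum_le_tsum_norm hTsummable_norm
        _ ≤ ∑' n : ℕ, M * (1/((x₀+(n:ℝ)+1)*(x₀+(n:ℝ)+2))) :=
            Summable.tsum_le_tsum hTnorm hTsummable_norm (hsum_tele.summable.mul_left M)
        _ = M * (1/(x₀+1)) := (hsum_tele.mul_left M).tsum_eq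
    rw [norm_mul] at h1
    have hx1pos : (0:ℝ) < x₀ + 1 := by linarith
    rw [hMeq]
    have h2 : ‖lam‖ * ‖f (x₀:ℂ)‖ * (x₀+1) ≤ M := by
      have := mul_le_mul_of_nonneg_right h1 hx1pos.le
      calc ‖lam‖ * ‖f (x₀:ℂ)‖ * (x₀+1) ≤ M * (1/(x₀+1)) * (x₀+1) := this
        _ = M := by field_simp
    calc ‖lam‖ * ((1+x₀) * ‖f (x₀:ℂ)‖) = ‖lam‖ * ‖f (x₀:ℂ)‖ * (x₀+1) := by ring
      _ ≤ M := h2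
      _ = (1+x₀) * ‖f (x₀:ℂ)‖ := hMeq
  have hlam_le : ‖lam‖ ≤ 1 := by
    by_contra hc
    push_neg at hc
    nlinarith
  refine ⟨hlam_le, ?_⟩
  -- Part 2 : equality case
  intro hl
  set c : ℂ := lam * ((1 + (x₀:ℂ)) * f (x₀:ℂ)) with hc
  have hcnorm : ‖c‖ = M := by
    rw [hc, norm_mul, hl, one_mul]
  have hcsum : HasSum (fun n => (1 + (x₀:ℂ)) * T n) c := by
    have h := hThasSum.mul_left (1 + (x₀:ℂ))
    rwa [show (1 + (x₀:ℂ)) * (lam * f (x₀:ℂ)) = c by rw [hc]; ring] at h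
  -- weights
  set w : ℕ → ℝ := fun n => (1+x₀) * (1/((x₀+(n:ℝ)+1)*(x₀+(n:ℝ)+2))) with hw
  have hwsum : HasSum w 1 := by
    have h := hsum_tele.mul_left (1+x₀)
    rwa [show (1+x₀) * (1/(x₀+1)) = 1 by rw [mul_one_div, div_eq_one_iff_eq (by positivity : (x₀:ℝ)+1 ≠ 0)]; ring] at h
  have hwpos : ∀ n, 0 < w n := fun n => by
    rw [hw]; positivity
  -- values
  set v : ℕ → ℂ := fun n => (1 + ((1/(x₀+(n:ℝ)+1):ℝ):ℂ)) * f (((1/(x₀+(n:ℝ)+1):ℝ)):ℂ) with hv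
  have hvnorm : ∀ n, ‖v n‖ ≤ M := fun n => hmax _ (hyIcc n)
  have hwv : ∀ n, ((w n : ℝ) : ℂ) * v n = (1 + (x₀:ℂ)) * T n := by
    intro n
    rw [hv, hw, hT]
    simp only []
    rw [hcast n]
    have h1 := hcnz n
    have h2 : ((x₀:ℂ) + (n:ℕ) + 2) ≠ 0 := by
      rw [show ((x₀:ℂ) + (n:ℕ) + 2) = ((x₀+(n:ℝ)+2 : ℝ) : ℂ) by push_cast; ring]
      exact_mod_cast (hp2 n).ne'
    push_cast
    field_simp
    ring
  have hvsum : HasSum (fun n => ((w n : ℝ) : ℂ) * v n) c := by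
    have : (fun n => ((w n : ℝ) : ℂ) * v n) = fun n => (1 + (x₀:ℂ)) * T n := funext hwv
    rw [this]; exact hcsum
  -- the real part argument
  have hre : HasSum (fun n => ((starRingEnd ℂ) c * (((w n : ℝ) : ℂ) * v n)).re)
      (((starRingEnd ℂ) c * c).re) :=
    Complex.hasSum_re (hvsum.mul_left ((starRingEnd ℂ) c))
  have hreval : (((starRingEnd ℂ) c * c)).re = M^2 := by
    rw [mul_comm, Complex.mul_conj]
    rw [← Complex.sq_norm, hcnorm]
    exact Complex.ofReal_re _
  have hterm_re : ∀ n, ((starRingEnd ℂ) c * (((w n : ℝ) : ℂ) * v n)).re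
      = w n * ((starRingEnd ℂ) c * v n).re := by
    intro n
    rw [show (starRingEnd ℂ) c * (((w n : ℝ) : ℂ) * v n) = ((w n : ℝ) : ℂ) * ((starRingEnd ℂ) c * v n) by ring]
    exact Complex.re_ofReal_mul _ _
  have hB : HasSum (fun n => w n * ((starRingEnd ℂ) c * v n).re) (M^2) := by
    have h := hre
    rw [hreval] at h
    have hfe : (fun n => ((starRingEnd ℂ) c * (((w n : ℝ) : ℂ) * v n)).re)
        = fun n => w n * ((starRingEnd ℂ) c * v n).re := funext hterm_re
    rwa [hfe] at h
  have hA : HasSum (fun n => w n * M^2) (M^2) := by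
    have h := hwsum.mul_right (M^2)
    rwa [one_mul] at h
  have hS0 : HasSum (fun n => w n * M^2 - w n * ((starRingEnd ℂ) c * v n).re) 0 := by
    have h := hA.sub hB
    rwa [sub_self] at h
  have hub : ∀ n, ((starRingEnd ℂ) c * v n).re ≤ M^2 := by
    intro n
    calc ((starRingEnd ℂ) c * v n).re ≤ ‖(starRingEnd ℂ) c * v n‖ :=
          Complex.re_le_norm _
      _ = ‖c‖ * ‖v n‖ := by
          rw [norm_mul, Complex.norm_conj]
      _ ≤ M * M := mul_le_mul (le_of_eq hcnorm) (hvnorm n) (norm_nonneg _) hMpos.le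
      _ = M^2 := (sq M).symm
  have hnonneg : ∀ n, 0 ≤ w n * M^2 - w n * ((starRingEnd ℂ) c * v n).re := by
    intro n
    have h := hub n
    have hwn := (hwpos n).le
    nlinarith
  have heach : ∀ n, ((starRingEnd ℂ) c * v n).re = M^2 := by
    intro n
    have hle := le_hasSum hS0 n (fun b _ => hnonneg b)
    have heq0 : w n * M^2 - w n * ((starRingEnd ℂ) c * v n).re = 0 :=
      le_antisymm hle (hnonneg n)
    have : w n * ((starRingEnd ℂ) c * v n).re = w n * M^2 := by linarith
    exact mul_left_cancel₀ (hwpos n).ne' this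
  have hveq : ∀ n, v n = c := by
    intro n
    have hnsq : Complex.normSq (v n - c) = 0 := by
      apply le_antisymm _ (Complex.normSq_nonneg _)
      rw [Complex.normSq_sub]
      have h1 : Complex.normSq (v n) ≤ M^2 := by
        rw [← Complex.sq_norm]
        have := hvnorm n
        nlinarith [norm_nonneg (v n)]
      have h2 : Complex.normSq c = M^2 := by
        rw [← Complex.sq_norm, hcnorm]
      have h3 : (v n * (starRingEnd ℂ) c).re = M^2 := by
        rw [mul_comm]
        exact heach n
      linarith
    have := Complex.normSq_eq_zero.mp hnsq
    exact sub_eq_zero.mp this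
  -- f agrees with c/(1+z) on the disc
  set F : ℂ → ℂ := fun z => c / (1+z) with hF
  have hFana : AnalyticOnNhd ℂ F gaussDisc := by
    intro z hz
    apply AnalyticAt.div analyticAt_const
    · exact analyticAt_const.add analyticAt_id
    · exact one_add_ne_zero_of_mem hz
  have heqF : Set.EqOn f F gaussDisc := by
    apply eqOn_of_seq hana hFana h0x
    intro n
    have hvn := hveq n
    rw [hv] at hvn
    simp only [] at hvn
    have hne : (1 + ((1/(x₀+(n:ℝ)+1):ℝ):ℂ)) ≠ 0 :=
      one_add_ne_zero_of_mem (coe_mem_gaussDisc (hyIcc n))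
    rw [hF]
    simp only []
    rw [eq_div_iff hne]
    linear_combination hvn
  -- lam = 1
  have hx₀disc : ((x₀:ℝ):ℂ) ∈ gaussDisc := coe_mem_gaussDisc hx₀
  have hne₀ : (1 + (x₀:ℂ)) ≠ 0 := one_add_ne_zero_of_mem hx₀disc
  have hfx₀ : f (x₀:ℂ) = c / (1 + (x₀:ℂ)) := heqF hx₀disc
  have hcne : c ≠ 0 := by
    intro h
    rw [h, norm_zero] at hcnorm
    exact hMpos.ne hcnorm
  have hlam1 : lam = 1 := by
    have hcc : c = lam * c := by
      have hstep : (1 + (x₀:ℂ)) * f (x₀:ℂ) = c := by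
        rw [hfx₀, mul_comm, div_mul_cancel₀ _ hne₀]
      calc c = lam * ((1 + (x₀:ℂ)) * f (x₀:ℂ)) := hc
        _ = lam * c := by rw [hstep]
    have : lam * c = 1 * c := by rw [one_mul, ← hcc]
    exact mul_right_cancel₀ hcne this
  refine ⟨hlam1, c * (Real.log 2 : ℂ), ?_⟩
  intro z hz
  have hLne : ((Real.log 2 : ℝ) : ℂ) ≠ 0 :=
    Complex.ofReal_ne_zero.mpr (Real.log_ne_zero_of_pos_of_ne_one (by norm_num) (by norm_num))
  have hzne : (1 + z) ≠ 0 := one_add_ne_zero_of_mem hz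
  rw [heqF hz, hF]
  simp only []
  rw [div_eq_div_iff hzne (mul_ne_zero hLne hzne)]
  ring
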